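/- Let n ≥ k ≥ 1 be integers, let F be a pointwise-increasing family of k-element subsets of [n], and let x, y ∈ [n] with x < y. Then, after standardisation, F_x^+ ⊆ F_y^+ as families of (k−1)-subsets of [n−1]. -/

import Mathlib

/-- The board `[n] = {1, …, n}` as a finite set of natural numbers. -/
def board (n : ℕ) : Finset ℕ := Finset.Icc 1 n

/-- The order-preserving relabelling of `[n] \ {x}` onto `[n-1]`:
elements below `x` are unchanged, elements above `x` drop by one. -/
def stdElt (x r : ℕ) : ℕ := if r < x then r else r - 1

/-- Standardise a set avoiding `x`: relabel it via `stdElt x`. -/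
def stdSet (x : ℕ) (S : Finset ℕ) : Finset ℕ := S.image (stdElt x)

/-- The standardised section `F_x^+ = { S \ {x} : x ∈ S ∈ F }`,
viewed as a family of subsets of `[n-1]`. -/
def secPlus (F : Set (Finset ℕ)) (x : ℕ) : Set (Finset ℕ) :=
  {T | ∃ S ∈ F, x ∈ S ∧ T = stdSet x (S.erase x)}

/-- The standardised section `F_x^- = { S ∈ F : x ∉ S }`,
viewed as a family of subsets of `[n-1]`. -/
def secMinus (F : Set (Finset ℕ)) (x : ℕ) : Set (Finset ℕ) :=
  {T | ∃ S ∈ F, x ∉ S ∧ T = stdSet x S}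

mutual
  /-- `AliceWins n k F`: Alice wins her `F`-game, where `F` is a family of
  `k`-subsets of `[n]`.  Terminal games (`k = 0` or `k = n`) are won iff `F`
  is nonempty; otherwise Alice needs a first offer `x` such that Bob wins both
  his `F_x^+`-game and his `F_x^-`-game. -/
  def AliceWins (n k : ℕ) (F : Set (Finset ℕ)) : Prop :=
    if h : k = 0 ∨ n ≤ k then F.Nonempty
    else ∃ x ∈ board n,
      BobWins (n - 1) (k - 1) (secPlus F x) ∧ BobWins (n - 1) k (secMinus F x)
  termination_by n
  decreasing_by all_goals omega

  /-- `BobWins n k F`: Bob wins his `F`-game, where `F` is a family of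
  `k`-subsets of `[n]`.  Terminal games (`k = 0` or `k = n`) are won iff `F`
  is nonempty; otherwise Bob needs, for every first offer `x`, that Alice wins
  her `F_x^+`-game or her `F_x^-`-game. -/
  def BobWins (n k : ℕ) (F : Set (Finset ℕ)) : Prop :=
    if h : k = 0 ∨ n ≤ k then F.Nonempty
    else ∀ x ∈ board n,
      AliceWins (n - 1) (k - 1) (secPlus F x) ∨ AliceWins (n - 1) k (secMinus F x)
  termination_by n
  decreasing_by all_goals omega
end

/-- `S ⪯ T` in the pointwise order: the increasing enumerations of `S` and `T`
have the same length and are pointwise `≤`. -/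
def PointwiseLE (S T : Finset ℕ) : Prop :=
  List.Forall₂ (· ≤ ·) (S.sort (· ≤ ·)) (T.sort (· ≤ ·))

/-- `F` consists of `k`-element subsets of `[n]`. -/
def IsFamilyOn (n k : ℕ) (F : Set (Finset ℕ)) : Prop :=
  ∀ S ∈ F, S ⊆ board n ∧ S.card = k

/-- `F` is pointwise-increasing as a family of `k`-subsets of `[n]`:
it is upwards closed in the pointwise order. -/
def IsIncreasingFamily (n k : ℕ) (F : Set (Finset ℕ)) : Prop :=
  ∀ S T : Finset ℕ, S ∈ F → T ⊆ board n → T.card = k → PointwiseLE S T → T ∈ F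

lemma sort_image_aux (S : Finset ℕ) (g : ℕ → ℕ)
    (hg : ∀ a ∈ S, ∀ b ∈ S, a < b → g a < g b) :
    (S.image g).sort (· ≤ ·) = (S.sort (· ≤ ·)).map g := by
  have hinj : Set.InjOn g S := by
    intro a ha b hb hab
    rcases lt_trichotomy a b with h | h | h
    · exact absurd hab (hg a ha b hb h).ne
    · exact h
    · exact absurd hab.symm (hg b hb a ha h).ne
  have hperm : List.Perm ((S.image g).sort (· ≤ ·)) ((S.sort (· ≤ ·)).map g) := by
    rw [← Multiset.coe_eq_coe, ← Multiset.map_coe, Finset.sort_eq, Finset.sort_eq,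
      Finset.image_val_of_injOn hinj]
  have hs1 : List.Pairwise (· ≤ ·) ((S.sort (· ≤ ·)).map g) := by
    rw [List.pairwise_map]
    refine (S.sortedLT_sort.pairwise).imp_of_mem ?_
    intro a b ha hb h
    exact (hg a (by simpa using (Finset.mem_sort _).mp ha)
      b (by simpa using (Finset.mem_sort _).mp hb) h).le
  exact List.Perm.eq_of_pairwise' (Finset.pairwise_sort _ _) hs1 hperm

lemma pointwiseLE_image_aux (S : Finset ℕ) (g : ℕ → ℕ)
    (hg : ∀ a ∈ S, ∀ b ∈ S, a < b → g a < g b)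
    (hle : ∀ a ∈ S, a ≤ g a) :
    PointwiseLE S (S.image g) := by
  rw [PointwiseLE, sort_image_aux S g hg, List.forall₂_map_right_iff]
  refine List.forall₂_same.mpr ?_
  intro a ha
  exact hle a (by simpa using (Finset.mem_sort _).mp ha)

lemma secPlus_step_aux (n k : ℕ) (hk : 1 ≤ k) (F : Set (Finset ℕ))
    (hF : IsFamilyOn n k F) (hinc : IsIncreasingFamily n k F)
    (x : ℕ) (hx1 : x + 1 ∈ board n) (hx0 : 1 ≤ x) :
    secPlus F x ⊆ secPlus F (x + 1) := by
  rintro T ⟨S, hS, hxS, rfl⟩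
  by_cases h : x + 1 ∈ S
  · refine ⟨S, hS, h, ?_⟩
    ext t
    simp only [stdSet, Finset.mem_image, Finset.mem_erase]
    constructor
    · rintro ⟨r, ⟨hr1, hr2⟩, rfl⟩
      by_cases hr : r = x + 1
      · exact ⟨x, ⟨by omega, hxS⟩, by subst hr; simp only [stdElt]; split_ifs <;> omega⟩
      · exact ⟨r, ⟨hr, hr2⟩, by simp only [stdElt]; split_ifs <;> omega⟩
    · rintro ⟨r, ⟨hr1, hr2⟩, rfl⟩
      by_cases hr : r = x
      · exact ⟨x + 1, ⟨by omega, h⟩, by subst hr; simp only [stdElt]; split_ifs <;> omega⟩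
      · exact ⟨r, ⟨hr, hr2⟩, by simp only [stdElt]; split_ifs <;> omega⟩
  · set g : ℕ → ℕ := fun r => if r = x then x + 1 else r with hg
    set S' : Finset ℕ := insert (x + 1) (S.erase x) with hS'
    have hne1 : ∀ a ∈ S, a ≠ x + 1 := fun a ha e => h (e ▸ ha)
    have hSg : S.image g = S' := by
      ext t
      simp only [hS', Finset.mem_image, Finset.mem_insert, Finset.mem_erase, hg]
      constructor
      · rintro ⟨r, hr, rfl⟩
        by_cases hrx : r = x
        · simp [hrx]
        · exact Or.inr ⟨by simp [hrx], by simpa [hrx] using hr⟩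
      · rintro (rfl | ⟨ht, htS⟩)
        · exact ⟨x, hxS, by simp⟩
        · exact ⟨t, htS, by simp [ht]⟩
    have hmono : ∀ a ∈ S, ∀ b ∈ S, a < b → g a < g b := by
      intro a ha b hb hab
      have := hne1 a ha
      have := hne1 b hb
      simp only [hg]
      split_ifs <;> omega
    have hle : ∀ a ∈ S, a ≤ g a := by
      intro a ha
      simp only [hg]
      split_ifs <;> omega
    have hsub : S' ⊆ board n := by
      refine Finset.insert_subset hx1 ?_
      exact (Finset.erase_subset _ _).trans (hF S hS).1
    have hnm : x + 1 ∉ S.erase x := fun hc => h (Finset.mem_of_mem_erase hc)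
    have hcard : S'.card = k := by
      rw [hS', Finset.card_insert_of_notMem hnm, Finset.card_erase_of_mem hxS,
        (hF S hS).2]
      omega
    have hS'F : S' ∈ F := hinc S S' hS hsub hcard (hSg ▸ pointwiseLE_image_aux S g hmono hle)
    refine ⟨S', hS'F, Finset.mem_insert_self _ _, ?_⟩
    rw [hS', Finset.erase_insert hnm]
    refine Finset.image_congr ?_
    intro r hr
    simp only [Finset.coe_erase, Set.mem_diff, Finset.mem_coe, Set.mem_singleton_iff] at hr
    have : r ≠ x + 1 := hne1 r hr.1
    have : r ≠ x := hr.2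
    simp only [stdElt]
    split_ifs <;> omega

/-- for an increasing family, the standardised `+`-sections
increase with the sectioning element: `F_x^+ ⊆ F_y^+` for `x < y`. -/
theorem secPlus_mono (n k : ℕ) (hk : 1 ≤ k) (hkn : k ≤ n) (F : Set (Finset ℕ))
    (hF : IsFamilyOn n k F) (hinc : IsIncreasingFamily n k F)
    (x y : ℕ) (hx : x ∈ board n) (hy : y ∈ board n) (hxy : x < y) :
    secPlus F x ⊆ secPlus F y := by
  simp only [board, Finset.mem_Icc] at hx hy
  induction y with
  | zero => omega
  | succ m ih =>
    rcases Nat.lt_succ_iff_lt_or_eq.mp hxy with hlt | heq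
    · have hm : 1 ≤ m ∧ m ≤ n := by omega
      refine (ih hlt hm).trans ?_
      exact secPlus_step_aux n k hk F hF hinc m
        (by simp [board, Finset.mem_Icc]; omega) hm.1
    · subst heq
      exact secPlus_step_aux n k hk F hF hinc x
        (by simp [board, Finset.mem_Icc]; omega) hx.1
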